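/- Let A be a commutative noetherian ring and f: M → N a homomorphism of finitely generated A-modules. Then the maps G_f(P): G_M(P) → G_N(P) are surjective for every finitely generated A-module P if and only if the induced map R(f): R(M) → R(N) of Rees algebras is surjective. -/

import Mathlib

open Module LinearMap TensorProduct

/-- The relation on the tensor algebra whose quotient is the symmetric algebra. -/
inductive SymRel (A : Type) [CommRing A] (M : Type) [AddCommGroup M] [Module A M] :
    TensorAlgebra A M → TensorAlgebra A M → Prop
  | mul_comm (x y : M) : SymRel A M (TensorAlgebra.ι A x * TensorAlgebra.ι A y)
      (TensorAlgebra.ι A y * TensorAlgebra.ι A x)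

/-- The symmetric algebra `Sym(M)` of a module `M`. -/
abbrev SymmAlg (A : Type) [CommRing A] (M : Type) [AddCommGroup M] [Module A M] : Type :=
  RingQuot (SymRel A M)

variable {A : Type} [CommRing A] {M N L : Type} [AddCommGroup M] [Module A M]
  [AddCommGroup N] [Module A N] [AddCommGroup L] [Module A L]

private lemma symmAlg_comm_aux (x y : TensorAlgebra A M) :
    RingQuot.mkAlgHom A (SymRel A M) x * RingQuot.mkAlgHom A (SymRel A M) y =
      RingQuot.mkAlgHom A (SymRel A M) y * RingQuot.mkAlgHom A (SymRel A M) x := by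
  induction x using TensorAlgebra.induction with
  | algebraMap r => simp [Algebra.commutes]
  | ι m =>
    induction y using TensorAlgebra.induction with
    | algebraMap r => simp [Algebra.commutes]
    | ι n => simpa [map_mul] using (RingQuot.mkAlgHom_rel A (SymRel.mul_comm m n))
    | mul a b ha hb => rw [map_mul, ← mul_assoc, ha, mul_assoc, hb, ← mul_assoc]
    | add a b ha hb => rw [map_add, mul_add, add_mul, ha, hb]
  | mul a b ha hb => rw [map_mul, mul_assoc, hb, ← mul_assoc, ha, mul_assoc]
  | add a b ha hb => rw [map_add, add_mul, mul_add, ha, hb]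

noncomputable instance (A : Type) [CommRing A] (M : Type) [AddCommGroup M] [Module A M] :
    CommRing (SymmAlg A M) :=
  { (inferInstance : Ring (SymmAlg A M)) with
    mul_comm := fun a b => by
      obtain ⟨x, rfl⟩ := RingQuot.mkAlgHom_surjective A (SymRel A M) a
      obtain ⟨y, rfl⟩ := RingQuot.mkAlgHom_surjective A (SymRel A M) b
      exact symmAlg_comm_aux x y }

/-- The canonical inclusion of `M` into the degree-one part of `Sym(M)`. -/
noncomputable def symι (A : Type) [CommRing A] {M : Type} [AddCommGroup M] [Module A M] :
    M →ₗ[A] SymmAlg A M :=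
  (RingQuot.mkAlgHom A (SymRel A M)).toLinearMap ∘ₗ TensorAlgebra.ι A

/-- Functoriality of the symmetric algebra: `Sym(g) : Sym(M) → Sym(N)`. -/
noncomputable def symMap (A : Type) [CommRing A] {M N : Type} [AddCommGroup M] [Module A M]
    [AddCommGroup N] [Module A N] (g : M →ₗ[A] N) : SymmAlg A M →ₐ[A] SymmAlg A N :=
  RingQuot.liftAlgHom A ⟨TensorAlgebra.lift A ((symι A) ∘ₗ g), by
    intro x y h
    cases h with
    | mul_comm a b => simp [mul_comm]⟩

@[simp] lemma symMap_ι (g : M →ₗ[A] N) (m : M) :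
    symMap A g (symι A m) = symι A (g m) := by
  simp [symMap, symι, RingQuot.liftAlgHom_mkAlgHom_apply]

lemma symmAlg_hom_ext {B : Type} [Semiring B] [Algebra A B] {f g : SymmAlg A M →ₐ[A] B}
    (h : ∀ m : M, f (symι A m) = g (symι A m)) : f = g := by
  have key : f.comp (RingQuot.mkAlgHom A (SymRel A M)) =
      g.comp (RingQuot.mkAlgHom A (SymRel A M)) := by
    apply TensorAlgebra.hom_ext
    apply LinearMap.ext
    intro m
    simpa [symι] using h m
  apply AlgHom.ext
  intro x
  obtain ⟨x, rfl⟩ := RingQuot.mkAlgHom_surjective A (SymRel A M) x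
  exact AlgHom.congr_fun key x

lemma symMap_comp_apply (g : N →ₗ[A] L) (f : M →ₗ[A] N) (x : SymmAlg A M) :
    symMap A (g ∘ₗ f) x = symMap A g (symMap A f x) := by
  have : symMap A (g ∘ₗ f) = (symMap A g).comp (symMap A f) := by
    apply symmAlg_hom_ext
    intro m
    simp
  rw [this]; rfl

/-- The data of a linear map from `M` into a finitely generated free module. -/
structure FreeTarget (A : Type) [CommRing A] (M : Type) [AddCommGroup M] [Module A M] where
  E : Type
  [instAddCommGroup : AddCommGroup E]
  [instModule : Module A E]
  [instFree : Module.Free A E]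
  [instFinite : Module.Finite A E]
  g : M →ₗ[A] E

attribute [instance] FreeTarget.instAddCommGroup FreeTarget.instModule
  FreeTarget.instFree FreeTarget.instFinite

/-- The ideal `I(M) ⊆ Sym(M)`: the intersection over all maps `g : M → E` into finitely
generated free modules of the kernels of `Sym(g)`. -/
noncomputable def reesIdeal (A : Type) [CommRing A] (M : Type) [AddCommGroup M]
    [Module A M] : Ideal (SymmAlg A M) :=
  ⨅ d : FreeTarget A M, RingHom.ker (symMap A d.g)

lemma reesIdeal_le_comap (f : M →ₗ[A] N) :
    reesIdeal A M ≤ Ideal.comap (symMap A f) (reesIdeal A N) := by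
  intro x hx
  simp only [reesIdeal, Ideal.mem_iInf] at hx
  simp only [Ideal.mem_comap, reesIdeal, Ideal.mem_iInf]
  intro d
  have hd := hx ⟨d.E, d.g ∘ₗ f⟩
  rw [RingHom.mem_ker] at hd ⊢
  rw [← symMap_comp_apply]
  exact hd

/-- The Rees algebra `R(M) = Sym(M)/I(M)` of a module `M`. -/
noncomputable abbrev ReesAlg (A : Type) [CommRing A] (M : Type) [AddCommGroup M]
    [Module A M] : Type :=
  SymmAlg A M ⧸ reesIdeal A M

/-- The induced map `R(f) : R(M) → R(N)` of Rees algebras. -/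
noncomputable def reesMap (A : Type) [CommRing A] {M N : Type} [AddCommGroup M]
    [Module A M] [AddCommGroup N] [Module A N] (f : M →ₗ[A] N) :
    ReesAlg A M →ₐ[A] ReesAlg A N :=
  Ideal.quotientMapₐ (reesIdeal A N) (symMap A f) (reesIdeal_le_comap f)

open Module LinearMap TensorProduct

/-- The natural map `α_{M,P} : M ⊗ P → Hom(M*, P)`, `α(m ⊗ p)(λ) = λ(m) • p`. -/
noncomputable def alphaMap (A : Type) [CommRing A] (M P : Type) [AddCommGroup M]
    [Module A M] [AddCommGroup P] [Module A P] :
    M ⊗[A] P →ₗ[A] (Module.Dual A M →ₗ[A] P) :=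
  (dualTensorHom A (Module.Dual A M) P) ∘ₗ
    (TensorProduct.map (Module.Dual.eval A M) LinearMap.id)

/-- `G_M(P)` is the image of `α_{M,P} : M ⊗ P → Hom(M*, P)`. -/
noncomputable def GFun (A : Type) [CommRing A] (M P : Type) [AddCommGroup M] [Module A M]
    [AddCommGroup P] [Module A P] : Submodule A (Module.Dual A M →ₗ[A] P) :=
  LinearMap.range (alphaMap A M P)

section AuxLemmas

variable {E P : Type} [AddCommGroup E] [Module A E] [AddCommGroup P] [Module A P]

lemma symι_def (m : M) :
    RingQuot.mkAlgHom A (SymRel A M) (TensorAlgebra.ι A m) = symι A m := rfl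

lemma symMap_mem_adjoin (w : M →ₗ[A] L) (x : SymmAlg A M) :
    symMap A w x ∈ Algebra.adjoin A (⇑(symι A) '' Set.range w) := by
  obtain ⟨t, rfl⟩ := RingQuot.mkAlgHom_surjective A (SymRel A M) x
  induction t using TensorAlgebra.induction with
  | algebraMap r =>
    rw [AlgHom.commutes, AlgHom.commutes]
    exact Subalgebra.algebraMap_mem _ r
  | ι m =>
    rw [symι_def, symMap_ι]
    exact Algebra.subset_adjoin ⟨w m, Set.mem_range_self m, rfl⟩
  | mul a b ha hb =>
    rw [map_mul, map_mul]
    exact mul_mem ha hb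
  | add a b ha hb =>
    rw [map_add, map_add]
    exact add_mem ha hb

lemma exists_symMap_eq {u : N →ₗ[A] L} {w : M →ₗ[A] L}
    (h : ∀ n, ∃ m, u n = w m) (y : SymmAlg A N) :
    ∃ x : SymmAlg A M, symMap A u y = symMap A w x := by
  obtain ⟨t, rfl⟩ := RingQuot.mkAlgHom_surjective A (SymRel A N) y
  induction t using TensorAlgebra.induction with
  | algebraMap r =>
    exact ⟨algebraMap A _ r, by simp only [AlgHom.commutes]⟩
  | ι n =>
    obtain ⟨m, hm⟩ := h n
    exact ⟨symι A m, by rw [symι_def, symMap_ι, symMap_ι, hm]⟩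
  | mul a b ha hb =>
    obtain ⟨x1, h1⟩ := ha; obtain ⟨x2, h2⟩ := hb
    exact ⟨x1 * x2, by simp only [map_mul, h1, h2]⟩
  | add a b ha hb =>
    obtain ⟨x1, h1⟩ := ha; obtain ⟨x2, h2⟩ := hb
    exact ⟨x1 + x2, by simp only [map_add, h1, h2]⟩

/-- The degree-one extraction map via the trivial square-zero extension. -/
noncomputable def phiTsze (A : Type) [CommRing A] (E : Type) [AddCommGroup E] [Module A E]
    [Module Aᵐᵒᵖ E] [IsCentralScalar A E] : SymmAlg A E →ₐ[A] TrivSqZeroExt A E :=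
  RingQuot.liftAlgHom A ⟨TensorAlgebra.lift A (TrivSqZeroExt.inrHom A E), by
    intro x y h
    cases h with
    | mul_comm a b =>
      simp [TensorAlgebra.lift_ι_apply, TrivSqZeroExt.inr_mul_inr]⟩

@[simp] lemma phiTsze_ι [Module Aᵐᵒᵖ E] [IsCentralScalar A E] (e : E) :
    phiTsze A E (symι A e) = TrivSqZeroExt.inr e := by
  simp [phiTsze, symι, RingQuot.liftAlgHom_mkAlgHom_apply]

lemma snd_phiTsze_mem [Module Aᵐᵒᵖ E] [IsCentralScalar A E] (W : Submodule A E)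
    {x : SymmAlg A E} (hx : x ∈ Algebra.adjoin A (⇑(symι A) '' (W : Set E))) :
    TrivSqZeroExt.snd (phiTsze A E x) ∈ W := by
  induction hx using Algebra.adjoin_induction with
  | mem z hz =>
    obtain ⟨e, he, rfl⟩ := hz
    rw [phiTsze_ι, TrivSqZeroExt.snd_inr]
    exact he
  | algebraMap r =>
    rw [AlgHom.commutes]
    simpa [TrivSqZeroExt.algebraMap_eq_inl] using W.zero_mem
  | add a b ha hb hpa hpb =>
    rw [map_add, TrivSqZeroExt.snd_add]
    exact add_mem hpa hpb
  | mul a b ha hb hpa hpb =>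
    rw [map_mul, TrivSqZeroExt.snd_mul]
    exact add_mem (Submodule.smul_mem _ _ hpb)
      (by rw [op_smul_eq_smul]; exact Submodule.smul_mem _ _ hpa)

end AuxLemmas

section AlphaLemmas

variable {P : Type} [AddCommGroup P] [Module A P]

lemma alpha_tmul (m : M) (p : P) (lam : Module.Dual A M) :
    alphaMap A M P (m ⊗ₜ[A] p) lam = lam m • p := by
  simp [alphaMap]

lemma alpha_rid (x : M ⊗[A] A) (mu : Module.Dual A M) :
    alphaMap A M A x mu = mu ((TensorProduct.rid A M) x) := by
  induction x using TensorProduct.induction_on with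
  | zero => simp
  | tmul m a =>
    rw [alpha_tmul, TensorProduct.rid_tmul, map_smul, smul_eq_mul, smul_eq_mul, mul_comm]
  | add a b ha hb => rw [map_add, map_add, LinearMap.add_apply, map_add, ha, hb]

end AlphaLemmas

/-- The maps `G_f(P) : G_M(P) → G_N(P)` are surjective for every finitely generated `P`
iff `R(f) : R(M) → R(N)` is surjective. -/
theorem stmt18 (A : Type) [CommRing A] [IsNoetherianRing A]
    (M N : Type) [AddCommGroup M] [Module A M] [Module.Finite A M]
    [AddCommGroup N] [Module A N] [Module.Finite A N]
    (f : M →ₗ[A] N) :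
    (∀ (P : Type) [AddCommGroup P] [Module A P] [Module.Finite A P],
        GFun A N P ≤ Submodule.map (LinearMap.lcomp A P f.dualMap) (GFun A M P)) ↔
      Function.Surjective (reesMap A f) := by
  classical
  haveI finDual : Module.Finite A (Module.Dual A N) := by
    obtain ⟨k, π, hπ⟩ := Module.Finite.exists_fin' A N
    exact Module.Finite.of_injective π.dualMap (π.dualMap_injective_of_surjective hπ)
  obtain ⟨k, s, hs⟩ := Module.Finite.exists_fin (R := A) (M := Module.Dual A N)
  set g : N →ₗ[A] (Fin k → A) := LinearMap.pi s with hgdef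
  -- every functional on `N` is a combination of the coordinates of `g`
  have hfactor : ∀ lam : Module.Dual A N, ∃ c : Fin k → A, ∀ n, lam n = ∑ i, c i * s i n := by
    intro lam
    have hmem : lam ∈ Submodule.span A (Set.range s) := hs ▸ Submodule.mem_top
    obtain ⟨c, hc⟩ := (Submodule.mem_span_range_iff_exists_fun A).mp hmem
    refine ⟨c, fun n => ?_⟩
    rw [← hc]
    simp [LinearMap.sum_apply, LinearMap.smul_apply, smul_eq_mul]
  -- the kernel of `Sym(g)` is contained in the Rees ideal (versality of `g`)
  have hker_le : RingHom.ker (symMap A g) ≤ reesIdeal A N := by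
    rw [reesIdeal]
    refine le_iInf fun d => ?_
    have hq : ∃ q : (Fin k → A) →ₗ[A] d.E, q ∘ₗ g = d.g := by
      let b := Module.Free.chooseBasis A d.E
      choose c hc using fun j => hfactor (b.coord j ∘ₗ d.g)
      refine ⟨∑ j, LinearMap.smulRight
        (∑ i, (c j i) • (LinearMap.proj i : (Fin k → A) →ₗ[A] A)) (b j), ?_⟩
      apply LinearMap.ext; intro n
      simp only [LinearMap.comp_apply, LinearMap.sum_apply, LinearMap.smulRight_apply,
        LinearMap.smul_apply, LinearMap.proj_apply, smul_eq_mul]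
      have key : ∀ j, (∑ i, c j i * g n i) = b.repr (d.g n) j := by
        intro j
        have := hc j n
        simp only [LinearMap.comp_apply, Basis.coord_apply] at this
        exact this.symm
      calc (∑ j, (∑ i, c j i * g n i) • b j)
          = ∑ j, b.repr (d.g n) j • b j := by
            exact Finset.sum_congr rfl fun j _ => by rw [key j]
        _ = d.g n := b.sum_repr _
    obtain ⟨q, hq⟩ := hq
    intro z hz
    rw [RingHom.mem_ker] at hz
    rw [RingHom.mem_ker, ← hq, symMap_comp_apply, hz, map_zero]
  have hrees_le : reesIdeal A N ≤ RingHom.ker (symMap A g) := by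
    rw [reesIdeal]
    exact iInf_le _ (⟨(Fin k → A), g⟩ : FreeTarget A N)
  -- the key intermediate condition
  have keyCond : ∀ (C : ∀ n : N, ∃ m : M, ∀ lam : Module.Dual A N, lam (f m) = lam n),
      Function.Surjective (reesMap A f) := by
    intro C
    have hCg : ∀ n : N, ∃ m : M, g n = (g ∘ₗ f) m := by
      intro n
      obtain ⟨m, hm⟩ := C n
      exact ⟨m, funext fun i => (hm (s i)).symm⟩
    intro yb
    obtain ⟨y, rfl⟩ := Ideal.Quotient.mk_surjective yb
    obtain ⟨x, hx⟩ := exists_symMap_eq hCg y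
    refine ⟨Ideal.Quotient.mk _ x, ?_⟩
    rw [reesMap, Ideal.quotient_map_mkₐ, Ideal.Quotient.mkₐ_eq_mk, Ideal.Quotient.eq]
    apply hker_le
    rw [RingHom.mem_ker, map_sub, ← symMap_comp_apply, ← hx, sub_self]
  constructor
  · -- forward: the G-condition implies surjectivity of the Rees map
    intro H
    apply keyCond
    intro n
    have hmem : alphaMap A N A (n ⊗ₜ (1 : A)) ∈ GFun A N A := ⟨n ⊗ₜ 1, rfl⟩
    obtain ⟨φ, hφ1, hφ2⟩ := Submodule.mem_map.mp (H A hmem)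
    obtain ⟨x, rfl⟩ := hφ1
    refine ⟨(TensorProduct.rid A M) x, fun lam => ?_⟩
    have hev := congrArg (fun ψ : Module.Dual A N →ₗ[A] A => ψ lam) hφ2
    simp only [lcomp_apply] at hev
    rw [alpha_rid, dualMap_apply] at hev
    rw [hev, alpha_tmul, smul_eq_mul, mul_one]
  · -- backward: surjectivity of the Rees map implies the G-condition
    intro hsurj
    have C : ∀ n : N, ∃ m : M, ∀ lam : Module.Dual A N, lam (f m) = lam n := by
      intro n
      obtain ⟨xb, hxb⟩ := hsurj (Ideal.Quotient.mk _ (symι A n))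
      obtain ⟨x, rfl⟩ := Ideal.Quotient.mk_surjective xb
      rw [reesMap, Ideal.quotient_map_mkₐ, Ideal.Quotient.mkₐ_eq_mk, Ideal.Quotient.eq] at hxb
      have h0 := hrees_le hxb
      rw [RingHom.mem_ker, map_sub, sub_eq_zero] at h0
      -- h0 : Sym(g)(Sym(f) x) = Sym(g)(ι n)
      have h2 : symι A (g n) = symMap A (g ∘ₗ f) x := by
        rw [← symMap_ι, ← h0, ← symMap_comp_apply]
      have h3 : g n ∈ LinearMap.range (g ∘ₗ f) := by
        have hadj := symMap_mem_adjoin (g ∘ₗ f) x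
        rw [← h2] at hadj
        have hW : (⇑(symι A) '' Set.range ⇑(g ∘ₗ f)) =
            (⇑(symι A) '' ((LinearMap.range (g ∘ₗ f) : Submodule A (Fin k → A)) :
              Set (Fin k → A))) := by
          rw [LinearMap.coe_range]
        rw [hW] at hadj
        have := snd_phiTsze_mem (LinearMap.range (g ∘ₗ f)) hadj
        simpa using this
      obtain ⟨m, hm⟩ := h3
      refine ⟨m, fun lam => ?_⟩
      obtain ⟨c, hc⟩ := hfactor lam
      rw [hc, hc]
      refine Finset.sum_congr rfl fun i _ => ?_
      have : s i (f m) = s i n := congrFun hm i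
      rw [this]
    intro P _ _ _
    rintro ξ ⟨y, rfl⟩
    induction y using TensorProduct.induction_on with
    | zero =>
      rw [map_zero]
      exact Submodule.zero_mem _
    | tmul n p =>
      obtain ⟨m, hm⟩ := C n
      refine Submodule.mem_map.mpr ⟨alphaMap A M P (m ⊗ₜ p), ⟨m ⊗ₜ p, rfl⟩, ?_⟩
      apply LinearMap.ext; intro lam
      rw [lcomp_apply, alpha_tmul, alpha_tmul, dualMap_apply, hm]
    | add a b ha hb =>
      rw [map_add]
      exact Submodule.add_mem _ ha hb
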